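/- Let X be a path-connected length space with basepoint p, let δ > 0, and let γ be a rectifiable loop in X of length L(γ) ≤ 2δ which is not δ-homotopic to a point (i.e. the class of α⁻¹·γ·α does not lie in π₁(X,δ,p) for a path α from p to γ(0)). Then L(γ) = 2δ, and the parametrization of γ proportional to arclength, viewed as a 2δ-periodic continuous map γ : ℝ → X, satisfies d(γ(s),γ(t)) = |s − t| whenever |s − t| ≤ δ; in particular γ is a closed geodesic of length 2δ which is minimizing over every subinterval of half its length. -/

import Mathlib

/- Common definitions: path length, length/geodesic spaces, δ-covering groups,
   covering spectra, cut-off covering groups and spectra, free homotopy,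
   loops-to-infinity. -/

open Metric Filter
open scoped NNReal ENNReal unitInterval

attribute [local instance] Path.Homotopic.setoid

/-- The length (total variation) of a path in a metric space. -/
noncomputable def pathLength {X : Type*} [MetricSpace X] {x y : X} (γ : Path x y) : ℝ≥0∞ :=
  eVariationOn γ Set.univ

/-- A metric space is a length space if the distance between any two points is the
infimum of the lengths of paths joining them. -/
def IsLengthSpace (X : Type*) [MetricSpace X] : Prop :=
  ∀ x y : X, ENNReal.ofReal (dist x y) = ⨅ γ : Path x y, pathLength γ

/-- A metric space is a geodesic space if any two points are joined by a
distance-realizing path. -/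
def IsGeodesicSpace (X : Type*) [MetricSpace X] : Prop :=
  ∀ x y : X, ∃ γ : Path x y, pathLength γ = ENNReal.ofReal (dist x y)

/-- The element of the fundamental group at `p` represented by the loop
`α⁻¹ · β · α` (i.e. follow `α` from `p` to `y`, the loop `β` at `y`, then `α` back). -/
noncomputable def loopClass {X : Type*} [TopologicalSpace X] {p y : X}
    (α : Path p y) (β : Path y y) : FundamentalGroup X p :=
  FundamentalGroup.fromPath (X := TopCat.of X) ⟦(α.trans β).trans α.symm⟧

/-- The δ-covering group `π₁(X, δ, p)`: the normal subgroup of `π₁(X,p)` generated by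
classes of loops `α⁻¹·β·α` with `β` lying in some open ball of radius `δ`. -/
noncomputable def coveringGroup (X : Type*) [MetricSpace X] (p : X) (δ : ℝ) :
    Subgroup (FundamentalGroup X p) :=
  Subgroup.normalClosure
    {g | ∃ (y : X) (β : Path y y) (α : Path p y),
      (∃ c : X, ∀ t, β t ∈ Metric.ball c δ) ∧ g = loopClass α β}

/-- The covering spectrum of `X` (with basepoint `p`). -/
def covSpec (X : Type*) [MetricSpace X] (p : X) : Set ℝ :=
  {δ | 0 < δ ∧ ∀ δ' > δ, coveringGroup X p δ' ≠ coveringGroup X p δ}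

/-- The `R` cut-off δ-covering group `π₁^{cut}(X, δ, R, x)`: the normal subgroup of
`π₁(X,x)` generated by classes of loops `α⁻¹·β·α` with `β` lying in some open ball of
radius `δ` or in the complement of the closed ball `B̄(x,R)`. -/
noncomputable def cutCoveringGroup (X : Type*) [MetricSpace X] (x : X) (δ R : ℝ) :
    Subgroup (FundamentalGroup X x) :=
  Subgroup.normalClosure
    {g | ∃ (y : X) (β : Path y y) (α : Path x y),
      ((∃ c : X, ∀ t, β t ∈ Metric.ball c δ) ∨ (∀ t, β t ∉ Metric.closedBall x R)) ∧
      g = loopClass α β}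

/-- The `R` cut-off covering spectrum of `(X,x)`. -/
def cutCovSpec (X : Type*) [MetricSpace X] (x : X) (R : ℝ) : Set ℝ :=
  {δ | 0 < δ ∧ ∀ δ' > δ, cutCoveringGroup X x δ' R ≠ cutCoveringGroup X x δ R}

/-- Two loops are freely homotopic: there is a homotopy through (not necessarily
based) loops from one to the other. -/
def FreelyHomotopic {X : Type*} [TopologicalSpace X] {a b : X}
    (γ₀ : Path a a) (γ₁ : Path b b) : Prop :=
  ∃ H : C(I × I, X),
    (∀ t, H (0, t) = γ₀ t) ∧ (∀ t, H (1, t) = γ₁ t) ∧ ∀ s, H (s, 0) = H (s, 1)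

/-- Two loops are freely homotopic within a subset `A`: the homotopy stays in `A`. -/
def FreelyHomotopicIn {X : Type*} [TopologicalSpace X] (A : Set X) {a b : X}
    (γ₀ : Path a a) (γ₁ : Path b b) : Prop :=
  ∃ H : C(I × I, X),
    (∀ t, H (0, t) = γ₀ t) ∧ (∀ t, H (1, t) = γ₁ t) ∧ (∀ s, H (s, 0) = H (s, 1)) ∧
    ∀ p, H p ∈ A

/-- A loop has the loops-to-infinity property: for every compact set it is freely
homotopic to a loop outside that set. -/
def LoopToInfinity {X : Type*} [TopologicalSpace X] {a : X} (γ : Path a a) : Prop :=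
  ∀ K : Set X, IsCompact K →
    ∃ (b : X) (η : Path b b), (∀ t, η t ∉ K) ∧ FreelyHomotopic γ η

/-- A space has the loops-to-infinity property if all of its loops do. -/
def LoopsToInfinity (X : Type*) [TopologicalSpace X] : Prop :=
  ∀ (a : X) (γ : Path a a), LoopToInfinity γ

/-- Concatenation of a finite list of loops based at `q`. -/
noncomputable def loopConcat {X : Type*} [TopologicalSpace X] (q : X) :
    List (Path q q) → Path q q
  | [] => Path.refl q
  | γ :: rest => γ.trans (loopConcat q rest)

/-- A space is semilocally simply connected if every point has a neighborhood in which
every loop is null-homotopic in the whole space. -/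
def SemilocallySimplyConnected (X : Type*) [TopologicalSpace X] : Prop :=
  ∀ x : X, ∃ U ∈ nhds x, ∀ (y : X) (γ : Path y y), (∀ t, γ t ∈ U) →
    γ.Homotopic (Path.refl y)

/-- A pointed ε-Hausdorff approximation. -/
def IsPointedHausdorffApprox {Z₁ Z₂ : Type*} [MetricSpace Z₁] [MetricSpace Z₂]
    (f : Z₁ → Z₂) (p₁ : Z₁) (p₂ : Z₂) (ε : ℝ) : Prop :=
  f p₁ = p₂ ∧ (∀ a b : Z₁, |dist (f a) (f b) - dist a b| < ε) ∧
    ∀ z : Z₂, ∃ a : Z₁, dist z (f a) ≤ ε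

instance coveringGroup_normal (X : Type*) [MetricSpace X] (p : X) (δ : ℝ) :
    (coveringGroup X p δ).Normal :=
  Subgroup.normalClosure_normal

instance cutCoveringGroup_normal (X : Type*) [MetricSpace X] (x : X) (δ R : ℝ) :
    (cutCoveringGroup X x δ R).Normal :=
  Subgroup.normalClosure_normal
namespace ClosedGeo

open Set

variable {X : Type*} [MetricSpace X]

lemma univ_eq_Icc : (Set.univ : Set I) = Set.Icc 0 1 := by
  ext u; simp [unitInterval.le_one', unitInterval.nonneg']

/-- affine segment map from a to b in I -/
def seg (a b : I) (hab : a ≤ b) (u : I) : I :=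
  ⟨(a:ℝ) + ((b:ℝ) - a) * u, by
    have hab' : (a:ℝ) ≤ b := hab
    constructor
    · nlinarith [a.2.1, u.2.1, u.2.2]
    · nlinarith [u.2.1, u.2.2, b.2.2, a.2.1]⟩

lemma seg_zero (a b : I) (hab : a ≤ b) : seg a b hab 0 = a := by
  simp [seg]

lemma seg_one (a b : I) (hab : a ≤ b) : seg a b hab 1 = b := by
  apply Subtype.ext; simp [seg]

lemma seg_continuous (a b : I) (hab : a ≤ b) : Continuous (seg a b hab) := by
  apply Continuous.subtype_mk; fun_prop

lemma seg_monotone (a b : I) (hab : a ≤ b) : Monotone (seg a b hab) := by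
  intro u v huv
  have hab' : (a:ℝ) ≤ b := hab
  have huv' : (u:ℝ) ≤ v := huv
  simp only [seg, Subtype.mk_le_mk]
  show (a:ℝ) + ((b:ℝ) - a) * u ≤ (a:ℝ) + ((b:ℝ) - a) * v
  nlinarith

lemma seg_image (a b : I) (hab : a ≤ b) : seg a b hab '' Set.univ = Set.Icc a b := by
  have hab' : (a:ℝ) ≤ b := hab
  ext x
  simp only [Set.image_univ, Set.mem_range, Set.mem_Icc]
  constructor
  · rintro ⟨u, rfl⟩
    constructor
    · show (a:ℝ) ≤ (a:ℝ) + ((b:ℝ) - a) * u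
      nlinarith [u.2.1, u.2.2]
    · show (a:ℝ) + ((b:ℝ) - a) * u ≤ (b:ℝ)
      nlinarith [u.2.1, u.2.2]
  · rintro ⟨h1, h2⟩
    rcases eq_or_lt_of_le hab' with h | h
    · refine ⟨0, ?_⟩
      apply Subtype.ext
      have h1' : (a:ℝ) ≤ x := h1
      have h2' : (x:ℝ) ≤ b := h2
      simp [seg]; linarith
    · refine ⟨⟨((x:ℝ) - a) / ((b:ℝ) - a), ?_, ?_⟩, ?_⟩
      · apply div_nonneg
        · have h1' : (a:ℝ) ≤ x := h1
          linarith
        · linarith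
      · rw [div_le_one (by linarith)]
        have h2' : (x:ℝ) ≤ b := h2
        linarith
      · apply Subtype.ext
        show (a:ℝ) + ((b:ℝ) - a) * (((x:ℝ) - a) / ((b:ℝ) - a)) = x
        rw [mul_comm, div_mul_eq_mul_div, mul_div_assoc,
          div_self (by linarith : (b:ℝ) - a ≠ 0), mul_one]
        ring

/-- the restriction of a path to [a,b], affinely reparametrized -/
def pathSeg {x z : X} (γ : Path x z) (a b : I) (hab : a ≤ b) : Path (γ a) (γ b) where
  toFun := fun u => γ (seg a b hab u)
  continuous_toFun := γ.continuous.comp (seg_continuous a b hab)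
  source' := by show γ (seg a b hab 0) = γ a; rw [seg_zero]
  target' := by show γ (seg a b hab 1) = γ b; rw [seg_one]

lemma pathSeg_coe {x z : X} (γ : Path x z) (a b : I) (hab : a ≤ b) :
    ⇑(pathSeg γ a b hab) = γ ∘ (seg a b hab) := rfl

lemma pathLength_pathSeg {x z : X} (γ : Path x z) (a b : I) (hab : a ≤ b) :
    pathLength (pathSeg γ a b hab) = eVariationOn γ (Set.Icc a b) := by
  rw [pathLength, ← seg_image a b hab]
  rw [show ⇑(pathSeg γ a b hab) = γ ∘ (seg a b hab) from rfl]
  exact eVariationOn.comp_eq_of_monotoneOn γ _ ((seg_monotone a b hab).monotoneOn _)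


lemma half_mem : (1/2 : ℝ) ∈ I := by constructor <;> norm_num

lemma icc_add {x z : X} (γ : Path x z) {a b c : I} (hab : a ≤ b) (hbc : b ≤ c) :
    eVariationOn γ (Set.Icc a b) + eVariationOn γ (Set.Icc b c)
      = eVariationOn γ (Set.Icc a c) := by
  have := eVariationOn.Icc_add_Icc (s := (Set.univ : Set I)) γ hab hbc (Set.mem_univ b)
  simpa [Set.univ_inter] using this

lemma pathLength_split {x z : X} (γ : Path x z) {a b : I} (hab : a ≤ b) :
    eVariationOn γ (Set.Icc 0 a) + eVariationOn γ (Set.Icc a b)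
      + eVariationOn γ (Set.Icc b 1) = pathLength γ := by
  rw [icc_add γ (unitInterval.nonneg' ) hab, icc_add γ (unitInterval.nonneg') (unitInterval.le_one'), pathLength, univ_eq_Icc]

lemma edist_le_eVar {x z : X} (γ : Path x z) {a b : I} (hab : a ≤ b) :
    edist (γ a) (γ b) ≤ eVariationOn γ (Set.Icc a b) :=
  eVariationOn.edist_le γ (Set.left_mem_Icc.2 hab) (Set.right_mem_Icc.2 hab)

/-- doubling map, clamped -/
def dbl (u : I) : I := ⟨min (2*(u:ℝ)) 1, by
  constructor
  · exact le_min (by nlinarith [u.2.1]) zero_le_one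
  · exact min_le_right _ _⟩

def dbl' (u : I) : I := ⟨max (2*(u:ℝ)-1) 0, by
  constructor
  · exact le_max_right _ _
  · refine max_le (by nlinarith [u.2.2]) zero_le_one⟩

lemma dbl_monotone : Monotone dbl := by
  intro u v huv
  have : (u:ℝ) ≤ v := huv
  simp only [dbl, Subtype.mk_le_mk]
  exact (show min (2*(u:ℝ)) 1 ≤ min (2*(v:ℝ)) 1 from min_le_min (by linarith) le_rfl)

lemma dbl'_monotone : Monotone dbl' := by
  intro u v huv
  have : (u:ℝ) ≤ v := huv
  simp only [dbl', Subtype.mk_le_mk]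
  exact (show max (2*(u:ℝ)-1) 0 ≤ max (2*(v:ℝ)-1) 0 from max_le_max (by linarith) le_rfl)

lemma dbl_image : dbl '' Set.Icc 0 ⟨1/2, half_mem⟩ = Set.univ := by
  apply Set.eq_univ_of_forall
  intro w
  refine ⟨⟨(w:ℝ)/2, by constructor <;> nlinarith [w.2.1, w.2.2]⟩, ?_, ?_⟩
  · constructor
    · exact Subtype.mk_le_mk.2 (by nlinarith [w.2.1])
    · exact Subtype.mk_le_mk.2 (by nlinarith [w.2.2])
  · apply Subtype.ext
    show min (2*((w:ℝ)/2)) 1 = w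
    rw [min_eq_left (by nlinarith [w.2.2])]
    ring

lemma dbl'_image : dbl' '' Set.Icc ⟨1/2, half_mem⟩ 1 = Set.univ := by
  apply Set.eq_univ_of_forall
  intro w
  refine ⟨⟨((w:ℝ)+1)/2, by constructor <;> nlinarith [w.2.1, w.2.2]⟩, ?_, ?_⟩
  · constructor
    · exact Subtype.mk_le_mk.2 (by nlinarith [w.2.1])
    · exact Subtype.mk_le_mk.2 (by nlinarith [w.2.2])
  · apply Subtype.ext
    show max (2*(((w:ℝ)+1)/2)-1) 0 = w
    rw [max_eq_left (by nlinarith [w.2.1])]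
    ring

lemma pathLength_trans {x y z : X} (P : Path x y) (Q : Path y z) :
    pathLength (P.trans Q) = pathLength P + pathLength Q := by
  have hsplit := eVariationOn.Icc_add_Icc (s := (Set.univ : Set I)) (P.trans Q)
    (a := 0) (b := ⟨1/2, half_mem⟩) (c := 1)
    (Subtype.mk_le_mk.2 (by norm_num)) (Subtype.mk_le_mk.2 (by norm_num)) (Set.mem_univ _)
  simp only [Set.univ_inter] at hsplit
  have h1 : eVariationOn (P.trans Q) (Set.Icc 0 ⟨1/2, half_mem⟩) = pathLength P := by
    have heq : Set.EqOn (P.trans Q) (P ∘ dbl) (Set.Icc 0 ⟨1/2, half_mem⟩) := by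
      intro u hu
      have hu2 : (u:ℝ) ≤ 1/2 := hu.2
      rw [Path.trans_apply]
      rw [dif_pos hu2]
      show _ = P (dbl u)
      congr 1
      apply Subtype.ext
      show 2*(u:ℝ) = min (2*(u:ℝ)) 1
      rw [min_eq_left (by linarith)]
    rw [eVariationOn.eq_of_eqOn heq,
      eVariationOn.comp_eq_of_monotoneOn P dbl (dbl_monotone.monotoneOn _),
      dbl_image, pathLength]
  have h2 : eVariationOn (P.trans Q) (Set.Icc ⟨1/2, half_mem⟩ 1) = pathLength Q := by
    have heq : Set.EqOn (P.trans Q) (Q ∘ dbl') (Set.Icc ⟨1/2, half_mem⟩ 1) := by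
      intro u hu
      have hu2 : (1/2:ℝ) ≤ u := hu.1
      rw [Path.trans_apply]
      by_cases h : (u:ℝ) ≤ 1/2
      · have hu' : (u:ℝ) = 1/2 := le_antisymm h hu2
        rw [dif_pos h]
        show P _ = Q (dbl' u)
        have h2 : dbl' u = 0 := Subtype.ext (by show max (2*(u:ℝ)-1) 0 = 0; rw [hu']; norm_num)
        rw [h2, congrArg P (Subtype.ext (show (2*(u:ℝ)) = ((1:I):ℝ) by rw [hu']; norm_num) :
          (⟨2*(u:ℝ), _⟩ : I) = 1)]
        simp
      · rw [dif_neg h]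
        show Q _ = Q (dbl' u)
        congr 1
        apply Subtype.ext
        show 2*(u:ℝ) - 1 = max (2*(u:ℝ)-1) 0
        rw [max_eq_left (by push_neg at h; linarith)]
    rw [eVariationOn.eq_of_eqOn heq,
      eVariationOn.comp_eq_of_monotoneOn Q dbl' (dbl'_monotone.monotoneOn _),
      dbl'_image, pathLength]
  rw [pathLength, univ_eq_Icc, ← hsplit, h1, h2]

lemma pathLength_symm {x y : X} (P : Path x y) :
    pathLength P.symm = pathLength P := by
  have : ⇑P.symm = P ∘ unitInterval.symm := rfl
  rw [pathLength, this,
    eVariationOn.comp_eq_of_antitoneOn P unitInterval.symm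
      (fun u _ v _ huv => (unitInterval.symm_le_symm).2 huv)]
  rw [pathLength]
  congr 1
  apply Set.eq_univ_of_forall
  intro w
  exact ⟨unitInterval.symm w, Set.mem_univ _, unitInterval.symm_symm w⟩

lemma pathLength_cast {x y x' y' : X} (P : Path x y) (hx : x' = x) (hy : y' = y) :
    pathLength (P.cast hx hy) = pathLength P := rfl


variable {δ : ℝ}

lemma mem_ball_of_small {z : X} (hδ : 0 < δ) (β : Path z z)
    (hβ : pathLength β < ENNReal.ofReal (2*δ)) : ∀ u, β u ∈ Metric.ball z δ := by
  intro u
  have h1 : edist z (β u) ≤ eVariationOn β (Set.Icc 0 u) := by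
    have := edist_le_eVar β (unitInterval.nonneg' : (0:I) ≤ u)
    simpa using this
  have h2 : edist z (β u) ≤ eVariationOn β (Set.Icc u 1) := by
    have := edist_le_eVar β (unitInterval.le_one' : u ≤ 1)
    rw [edist_comm]
    simpa using this
  have hadd : eVariationOn β (Set.Icc 0 u) + eVariationOn β (Set.Icc u 1) = pathLength β := by
    rw [icc_add β (unitInterval.nonneg') (unitInterval.le_one'), pathLength, univ_eq_Icc]
  have h3 : 2 * edist z (β u) < 2 * ENNReal.ofReal δ := by
    calc 2 * edist z (β u) = edist z (β u) + edist z (β u) := by ring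
    _ ≤ eVariationOn β (Set.Icc 0 u) + eVariationOn β (Set.Icc u 1) := add_le_add h1 h2
    _ = pathLength β := hadd
    _ < ENNReal.ofReal (2*δ) := hβ
    _ = 2 * ENNReal.ofReal δ := by
        rw [ENNReal.ofReal_mul (by norm_num)]
        norm_num
  have h4 : edist z (β u) < ENNReal.ofReal δ :=
    lt_of_mul_lt_mul_left' h3
  rw [Metric.mem_ball, dist_comm, dist_edist]
  rw [edist_dist] at h4
  have := ENNReal.ofReal_lt_ofReal_iff_of_nonneg (dist_nonneg) |>.mp h4
  rwa [dist_edist] at this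

lemma mem_coveringGroup_of_ball {p y' : X} (α' : Path p y') (β : Path y' y') (c : X)
    (h : ∀ u, β u ∈ Metric.ball c δ) : loopClass α' β ∈ coveringGroup X p δ :=
  Subgroup.subset_normalClosure ⟨y', β, α', ⟨c, h⟩, rfl⟩

lemma exists_short_path (hX : IsLengthSpace X) (x y : X) {m : ℝ≥0∞}
    (h : ENNReal.ofReal (dist x y) < m) : ∃ q : Path x y, pathLength q < m := by
  rw [hX x y] at h
  exact iInf_lt_iff.mp h

open CategoryTheory in
lemma loopClass_decomp {X : Type*} [TopologicalSpace X] {p y u v : X} (α : Path p y)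
    (γ : Path y y) (A : Path y u) (B : Path u v) (C : Path v y) (sig : Path u v)
    (hγ : γ.Homotopic ((A.trans B).trans C)) :
    loopClass α γ
      = loopClass α ((A.trans sig).trans C) * loopClass (α.trans A) (B.trans sig.symm) := by
  rw [End.mul_def]
  show FundamentalGroupoid.fromPath (X := TopCat.of X) ⟦(α.trans γ).trans α.symm⟧
    = FundamentalGroupoid.fromPath
        ⟦((α.trans A).trans (B.trans sig.symm)).trans (α.trans A).symm⟧
      ≫ FundamentalGroupoid.fromPath ⟦(α.trans ((A.trans sig).trans C)).trans α.symm⟧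
  have hq : ∀ {a b c : X} (P : Path a b) (Q : Path b c),
      (FundamentalGroupoid.fromPath (X := TopCat.of X) ⟦P.trans Q⟧) =
        FundamentalGroupoid.fromPath ⟦P⟧ ≫ FundamentalGroupoid.fromPath ⟦Q⟧ :=
    fun P Q => rfl
  have hsymm : ∀ {a b : X} (P : Path a b),
      (FundamentalGroupoid.fromPath (X := TopCat.of X) ⟦P.symm⟧) =
        CategoryTheory.inv (FundamentalGroupoid.fromPath ⟦P⟧) := by
    intro a b P
    rw [← Groupoid.inv_eq_inv]
    rfl
  have hγ' : (FundamentalGroupoid.fromPath (X := TopCat.of X) ⟦γ⟧)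
      = FundamentalGroupoid.fromPath ⟦(A.trans B).trans C⟧ := Quotient.sound hγ
  simp only [hq, hsymm, hγ']
  simp [Category.assoc, IsIso.inv_comp]


/-- splitting reparametrization function -/
def spl (s t : I) (hst : s ≤ t) (w : I) : I :=
  ⟨(s:ℝ) * min (4*(w:ℝ)) 1 + ((t:ℝ) - s) * min (max (4*(w:ℝ) - 1) 0) 1
    + (1 - (t:ℝ)) * max (2*(w:ℝ) - 1) 0, by
    have hst' : (s:ℝ) ≤ t := hst
    have h1 : (0:ℝ) ≤ min (4*(w:ℝ)) 1 := le_min (by nlinarith [w.2.1]) zero_le_one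
    have h2 : min (4*(w:ℝ)) 1 ≤ 1 := min_le_right _ _
    have h3 : (0:ℝ) ≤ min (max (4*(w:ℝ) - 1) 0) 1 := le_min (le_max_right _ _) zero_le_one
    have h4 : min (max (4*(w:ℝ) - 1) 0) 1 ≤ 1 := min_le_right _ _
    have h5 : (0:ℝ) ≤ max (2*(w:ℝ) - 1) 0 := le_max_right _ _
    have h6 : max (2*(w:ℝ) - 1) 0 ≤ 1 := max_le (by nlinarith [w.2.2]) zero_le_one
    constructor
    · have ha := mul_nonneg s.2.1 h1
      have hb := mul_nonneg (sub_nonneg.2 hst') h3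
      have hc := mul_nonneg (sub_nonneg.2 t.2.2) h5
      linarith
    · have ha := mul_le_mul_of_nonneg_left h2 s.2.1
      have hb := mul_le_mul_of_nonneg_left h4 (sub_nonneg.2 hst')
      have hc := mul_le_mul_of_nonneg_left h6 (sub_nonneg.2 t.2.2)
      nlinarith [s.2.1, t.2.2]⟩

lemma spl_continuous (s t : I) (hst : s ≤ t) : Continuous (spl s t hst) := by
  apply Continuous.subtype_mk
  fun_prop

lemma spl_zero (s t : I) (hst : s ≤ t) : spl s t hst 0 = 0 := by
  apply Subtype.ext
  show (s:ℝ) * min (4*((0:I):ℝ)) 1 + _ + _ = ((0:I):ℝ)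
  norm_num

lemma spl_one (s t : I) (hst : s ≤ t) : spl s t hst 1 = 1 := by
  apply Subtype.ext
  show (s:ℝ) * min (4*((1:I):ℝ)) 1 + ((t:ℝ) - s) * min (max (4*((1:I):ℝ) - 1) 0) 1
    + (1 - (t:ℝ)) * max (2*((1:I):ℝ) - 1) 0 = ((1:I):ℝ)
  norm_num

lemma loop_split3 {y : X} (γ : Path y y) (s t : I) (hst : s ≤ t) :
    γ.Homotopic
      ((((pathSeg γ 0 s unitInterval.nonneg').cast γ.source.symm rfl).trans
          (pathSeg γ s t hst)).trans
        ((pathSeg γ t 1 unitInterval.le_one').cast rfl γ.target.symm)) := by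
  have heq : γ.reparam (spl s t hst) (spl_continuous s t hst) (spl_zero s t hst)
      (spl_one s t hst)
      = (((pathSeg γ 0 s unitInterval.nonneg').cast γ.source.symm rfl).trans
          (pathSeg γ s t hst)).trans
        ((pathSeg γ t 1 unitInterval.le_one').cast rfl γ.target.symm) := by
    ext w
    show γ (spl s t hst w) = _
    rw [Path.trans_apply]
    by_cases h1 : (w:ℝ) ≤ 1/2
    · rw [dif_pos h1, Path.trans_apply]
      by_cases h2 : (2*(w:ℝ) ≤ 1/2)
      · rw [dif_pos (show ((⟨2*(w:ℝ), _⟩:I):ℝ) ≤ 1/2 from h2)]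
        show _ = γ (seg 0 s unitInterval.nonneg' _)
        congr 1
        apply Subtype.ext
        show (s:ℝ) * min (4*(w:ℝ)) 1 + ((t:ℝ) - s) * min (max (4*(w:ℝ) - 1) 0) 1
          + (1 - (t:ℝ)) * max (2*(w:ℝ) - 1) 0 = ((0:I):ℝ) + ((s:ℝ) - ((0:I):ℝ)) * (2*(2*(w:ℝ)))
        rw [min_eq_left (by linarith), max_eq_right (by linarith : 4*(w:ℝ) - 1 ≤ 0),
          max_eq_right (by linarith : 2*(w:ℝ) - 1 ≤ 0),
          min_eq_left (by norm_num : (0:ℝ) ≤ 1)]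
        rw [Set.Icc.coe_zero]
        ring
      · rw [dif_neg (show ¬((⟨2*(w:ℝ), _⟩:I):ℝ) ≤ 1/2 from h2)]
        push_neg at h2
        show _ = γ (seg s t hst _)
        congr 1
        apply Subtype.ext
        show (s:ℝ) * min (4*(w:ℝ)) 1 + ((t:ℝ) - s) * min (max (4*(w:ℝ) - 1) 0) 1
          + (1 - (t:ℝ)) * max (2*(w:ℝ) - 1) 0 = (s:ℝ) + ((t:ℝ) - s) * (2*(2*(w:ℝ)) - 1)
        rw [min_eq_right (by linarith), max_eq_left (by linarith : (0:ℝ) ≤ 4*(w:ℝ) - 1),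
          min_eq_left (by linarith), max_eq_right (by linarith : 2*(w:ℝ) - 1 ≤ 0)]
        ring
    · rw [dif_neg h1]
      push_neg at h1
      show _ = γ (seg t 1 unitInterval.le_one' _)
      congr 1
      apply Subtype.ext
      show (s:ℝ) * min (4*(w:ℝ)) 1 + ((t:ℝ) - s) * min (max (4*(w:ℝ) - 1) 0) 1
        + (1 - (t:ℝ)) * max (2*(w:ℝ) - 1) 0 = (t:ℝ) + (((1:I):ℝ) - (t:ℝ)) * (2*(w:ℝ) - 1)
      rw [min_eq_right (by linarith), max_eq_left (by linarith : (0:ℝ) ≤ 4*(w:ℝ) - 1),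
        min_eq_right (by linarith), max_eq_left (by linarith : (0:ℝ) ≤ 2*(w:ℝ) - 1)]
      rw [Set.Icc.coe_one]
      ring
  have h := Path.Homotopy.reparam γ (spl s t hst) (spl_continuous s t hst) (spl_zero s t hst)
    (spl_one s t hst)
  rw [heq] at h
  exact ⟨h⟩


lemma key_mem (hδ : 0 < δ) {p y : X} (α : Path p y) (γ : Path y y) (s t : I) (hst : s ≤ t)
    (sg : Path (γ s) (γ t))
    (h1 : pathLength sg + eVariationOn γ (Set.Icc s t) < ENNReal.ofReal (2*δ))
    (h2 : pathLength sg + (eVariationOn γ (Set.Icc 0 s) + eVariationOn γ (Set.Icc t 1))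
      < ENNReal.ofReal (2*δ)) :
    loopClass α γ ∈ coveringGroup X p δ := by
  set A : Path y (γ s) := (pathSeg γ 0 s unitInterval.nonneg').cast γ.source.symm rfl with hA
  set B : Path (γ s) (γ t) := pathSeg γ s t hst with hB
  set C : Path (γ t) y := (pathSeg γ t 1 unitInterval.le_one').cast rfl γ.target.symm with hC
  rw [loopClass_decomp α γ A B C sg (loop_split3 γ s t hst)]
  apply Subgroup.mul_mem
  · refine mem_coveringGroup_of_ball _ _ y (mem_ball_of_small hδ _ ?_)
    rw [pathLength_trans, pathLength_trans, hA, hC, pathLength_cast, pathLength_cast,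
      pathLength_pathSeg, pathLength_pathSeg]
    calc eVariationOn γ (Set.Icc 0 s) + pathLength sg + eVariationOn γ (Set.Icc t 1)
        = pathLength sg + (eVariationOn γ (Set.Icc 0 s) + eVariationOn γ (Set.Icc t 1)) := by
          ring
      _ < ENNReal.ofReal (2*δ) := h2
  · refine mem_coveringGroup_of_ball _ _ (γ s) (mem_ball_of_small hδ _ ?_)
    rw [pathLength_trans, pathLength_symm, hB, pathLength_pathSeg]
    calc eVariationOn γ (Set.Icc s t) + pathLength sg
        = pathLength sg + eVariationOn γ (Set.Icc s t) := by ring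
      _ < ENNReal.ofReal (2*δ) := h1

lemma master (hX : IsLengthSpace X) (hδ : 0 < δ) {p y : X} (α : Path p y) (γ : Path y y)
    (htot : pathLength γ = ENNReal.ofReal (2*δ))
    (hnot : loopClass α γ ∉ coveringGroup X p δ) (s t : I) (hst : s ≤ t) :
    dist (γ s) (γ t) = min ((eVariationOn γ (Set.Icc s t)).toReal)
      (2*δ - (eVariationOn γ (Set.Icc s t)).toReal) := by
  have hfin : ∀ a b : I, eVariationOn γ (Set.Icc a b) ≠ ⊤ := by
    intro a b
    refine ne_top_of_le_ne_top ?_ (eVariationOn.mono γ (Set.subset_univ _))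
    rw [← pathLength, htot]
    exact ENNReal.ofReal_ne_top
  have hsplit := pathLength_split γ hst
  rw [htot] at hsplit
  set V := (eVariationOn γ (Set.Icc s t)).toReal with hV
  set V0 := (eVariationOn γ (Set.Icc 0 s)).toReal with hV0
  set V1 := (eVariationOn γ (Set.Icc t 1)).toReal with hV1
  have hsplitR : V0 + V + V1 = 2*δ := by
    have := congrArg ENNReal.toReal hsplit
    rw [ENNReal.toReal_add (by
        exact ENNReal.add_ne_top.2 ⟨hfin 0 s, hfin s t⟩) (hfin t 1),
      ENNReal.toReal_add (hfin 0 s) (hfin s t),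
      ENNReal.toReal_ofReal (by linarith)] at this
    linarith
  have hV0n : 0 ≤ V0 := ENNReal.toReal_nonneg
  have hVn : 0 ≤ V := ENNReal.toReal_nonneg
  have hV1n : 0 ≤ V1 := ENNReal.toReal_nonneg
  have hupper : ∀ a b : I, a ≤ b → dist (γ a) (γ b) ≤ (eVariationOn γ (Set.Icc a b)).toReal := by
    intro a b hab
    rw [dist_edist]
    exact ENNReal.toReal_mono (hfin a b) (edist_le_eVar γ hab)
  have upper1 : dist (γ s) (γ t) ≤ V := hupper s t hst
  have upper2 : dist (γ s) (γ t) ≤ 2*δ - V := by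
    have d1 : dist (γ s) (γ 0) ≤ V0 := by
      rw [dist_comm]; exact hupper 0 s unitInterval.nonneg'
    have d2 : dist (γ 1) (γ t) ≤ V1 := by
      rw [dist_comm]; exact hupper t 1 unitInterval.le_one'
    have h01 : γ (0:I) = γ (1:I) := by rw [γ.source, γ.target]
    calc dist (γ s) (γ t) ≤ dist (γ s) (γ 0) + dist (γ 0) (γ t) := dist_triangle _ _ _
      _ = dist (γ s) (γ 0) + dist (γ 1) (γ t) := by rw [h01]
      _ ≤ V0 + V1 := add_le_add d1 d2
      _ = 2*δ - V := by linarith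
  refine le_antisymm (le_min upper1 upper2) (not_lt.1 fun hlt => hnot ?_)
  set m := min V (2*δ - V) with hm
  have hm0 : 0 ≤ m := le_min hVn (by linarith [min_le_left V (2*δ - V), dist_nonneg.trans hlt.le])
  obtain ⟨sg, hsg⟩ := exists_short_path hX (γ s) (γ t)
    (show ENNReal.ofReal (dist (γ s) (γ t)) < ENNReal.ofReal m from
      (ENNReal.ofReal_lt_ofReal_iff (lt_of_le_of_lt dist_nonneg hlt)).2 hlt)
  refine key_mem hδ α γ s t hst sg ?_ ?_
  · calc pathLength sg + eVariationOn γ (Set.Icc s t)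
        < ENNReal.ofReal m + eVariationOn γ (Set.Icc s t) :=
          ENNReal.add_lt_add_right (hfin s t) hsg
      _ = ENNReal.ofReal (m + V) := by
          rw [ENNReal.ofReal_add hm0 hVn, ENNReal.ofReal_toReal (hfin s t)]
      _ ≤ ENNReal.ofReal (2*δ) := ENNReal.ofReal_le_ofReal
          (by have := min_le_right V (2*δ - V); rw [hm]; linarith [min_le_right V (2*δ - V)])
  · calc pathLength sg + (eVariationOn γ (Set.Icc 0 s) + eVariationOn γ (Set.Icc t 1))
        < ENNReal.ofReal m + (eVariationOn γ (Set.Icc 0 s) + eVariationOn γ (Set.Icc t 1)) :=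
          ENNReal.add_lt_add_right (ENNReal.add_ne_top.2 ⟨hfin 0 s, hfin t 1⟩) hsg
      _ = ENNReal.ofReal (m + (V0 + V1)) := by
          rw [ENNReal.ofReal_add hm0 (by linarith), ENNReal.ofReal_add hV0n hV1n,
            ENNReal.ofReal_toReal (hfin 0 s), ENNReal.ofReal_toReal (hfin t 1)]
      _ ≤ ENNReal.ofReal (2*δ) := ENNReal.ofReal_le_ofReal
          (by have := min_le_left V (2*δ - V); rw [hm]; linarith [min_le_left V (2*δ - V)])


lemma surj_aux (hX : IsLengthSpace X) (hδ : 0 < δ) {p y : X} (α : Path p y) (γ : Path y y)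
    (htot : pathLength γ = ENNReal.ofReal (2*δ))
    (hnot : loopClass α γ ∉ coveringGroup X p δ)
    {x : ℝ} (hx0 : 0 ≤ x) (hx2 : x ≤ 2*δ) :
    ∃ u : I, (eVariationOn γ (Set.Icc 0 u)).toReal = x := by
  have hfin : ∀ a b : I, eVariationOn γ (Set.Icc a b) ≠ ⊤ := by
    intro a b
    refine ne_top_of_le_ne_top ?_ (eVariationOn.mono γ (Set.subset_univ _))
    rw [← pathLength, htot]
    exact ENNReal.ofReal_ne_top
  set v : I → ℝ := fun u => (eVariationOn γ (Set.Icc 0 u)).toReal with hv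
  have hv0 : v 0 = 0 := by
    simp only [hv, Set.Icc_self]
    rw [eVariationOn.subsingleton γ (Set.subsingleton_singleton)]
    simp
  have hv1 : v 1 = 2*δ := by
    have h : eVariationOn (⇑γ) (Set.Icc (0:I) 1) = ENNReal.ofReal (2*δ) := by
      rw [← univ_eq_Icc]; exact htot
    show (eVariationOn (⇑γ) (Set.Icc (0:I) 1)).toReal = 2*δ
    rw [h, ENNReal.toReal_ofReal (by linarith)]
  have hmono : Monotone v := fun a b hab =>
    ENNReal.toReal_mono (hfin 0 b) (eVariationOn.mono γ (Set.Icc_subset_Icc le_rfl hab))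
  have hvnn : ∀ u, 0 ≤ v u := fun u => ENNReal.toReal_nonneg
  have hvub : ∀ u, v u ≤ 2*δ := fun u => hv1 ▸ hmono unitInterval.le_one'
  have hVst : ∀ s t : I, s ≤ t → (eVariationOn γ (Set.Icc s t)).toReal = v t - v s := by
    intro s t hst
    have := icc_add γ (unitInterval.nonneg' : (0:I) ≤ s) hst
    have h2 := congrArg ENNReal.toReal this
    rw [ENNReal.toReal_add (hfin 0 s) (hfin s t)] at h2
    simp only [hv]
    linarith [h2]
  have hmaster : ∀ s t : I, s ≤ t →
      dist (γ s) (γ t) = min (v t - v s) (2*δ - (v t - v s)) := by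
    intro s t hst
    rw [master hX hδ α γ htot hnot s t hst, hVst s t hst]
  -- begin contradiction argument
  by_contra hno
  push_neg at hno
  have hx0' : 0 < x := lt_of_le_of_ne hx0 (fun h => hno 0 (hv0.trans h))
  have hx2' : x < 2*δ := lt_of_le_of_ne hx2 (fun h => hno 1 (hv1.trans h.symm))
  set S : Set ℝ := (fun u : I => (u:ℝ)) '' {u : I | v u < x} with hS
  have hS0 : (0:ℝ) ∈ S := ⟨0, by simp only [Set.mem_setOf_eq, hv0]; exact hx0', rfl⟩
  have hSne : S.Nonempty := ⟨0, hS0⟩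
  have hSbdd : BddAbove S := ⟨1, by rintro a ⟨u, _, rfl⟩; exact u.2.2⟩
  set sR := sSup S with hsR
  have hsR0 : 0 ≤ sR := le_csSup hSbdd hS0
  have hsR1 : sR ≤ 1 := csSup_le hSne (by rintro a ⟨u, _, rfl⟩; exact u.2.2)
  set s : I := ⟨sR, hsR0, hsR1⟩ with hs
  have hgt : ∀ u : I, s < u → x < v u := by
    intro u hu
    have h1 : ¬ v u < x := by
      intro h
      have : (u:ℝ) ≤ sR := le_csSup hSbdd ⟨u, h, rfl⟩
      exact absurd hu (not_lt.2 this)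
    exact lt_of_le_of_ne (not_lt.1 h1) (fun h => hno u h.symm)
  have hnear : ∀ ε : ℝ, 0 < ε → ∃ u : I, v u < x ∧ sR - ε < (u:ℝ) := by
    intro ε hε
    obtain ⟨a, ⟨u, hu, rfl⟩, ha⟩ := exists_lt_of_lt_csSup hSne (show sR - ε < sR by linarith)
    exact ⟨u, hu, ha⟩
  have hcont : ∀ ε : ℝ, 0 < ε → ∃ r > 0, ∀ u : I, dist u s < r → dist (γ u) (γ s) < ε := by
    intro ε hε
    have hca : ContinuousAt γ s := γ.continuous.continuousAt
    rw [Metric.continuousAt_iff] at hca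
    obtain ⟨r, hr, h⟩ := hca ε hε
    exact ⟨r, hr, fun u hu => h hu⟩
  have hsmall : (∀ u : I, v u = 0 ∨ v u = 2*δ) → False := by
    intro hval
    refine hnot (mem_coveringGroup_of_ball α γ y (fun u => ?_))
    rw [Metric.mem_ball]
    have h0u : dist (γ 0) (γ u) = min (v u) (2*δ - (v u)) := by
      have := hmaster 0 u unitInterval.nonneg'
      rw [hv0] at this
      simpa using this
    have hdy : dist (γ u) y = min (v u) (2*δ - (v u)) := by
      have h00 : dist (γ u) y = dist (γ u) (γ 0) := by rw [γ.source]
      rw [h00, dist_comm, h0u]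
    rcases hval u with h | h <;> rw [hdy, h] <;> simp only [min_def] <;> split <;> linarith
  rcases lt_or_gt_of_ne (hno s) with hvs | hvs
  · -- v s < x
    have hs1R : sR < 1 := by
      rcases lt_or_eq_of_le hsR1 with h | h
      · exact h
      · exfalso
        have : v s = 2*δ := by rw [show s = 1 from Subtype.ext h, hv1]
        linarith
    have core : ∀ η : ℝ, 0 < η → ∀ w₀ : I, s < w₀ →
        ∃ u : I, s < u ∧ u ≤ w₀ ∧ v s + (2*δ - v u) < η := by
      intro η hη w₀ hw₀
      set ε := min η (x - v s) with hε
      have hεpos : 0 < ε := lt_min hη (by linarith)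
      obtain ⟨r, hr, hball⟩ := hcont ε hεpos
      set q : I := ⟨min 1 (sR + r/2), le_min zero_le_one (by linarith), min_le_left _ _⟩ with hq
      have hsq : s < q := by
        rw [← Subtype.coe_lt_coe]
        show sR < min 1 (sR + r/2)
        exact lt_min hs1R (by linarith)
      set u := min w₀ q with hu
      have hsu : s < u := lt_min hw₀ hsq
      have hdistu : dist u s < r := by
        rw [Subtype.dist_eq, Real.dist_eq,
          abs_of_nonneg (sub_nonneg.2 (Subtype.coe_le_coe.2 hsu.le))]
        have huq : (u:ℝ) ≤ (q:ℝ) := Subtype.coe_le_coe.2 (min_le_right _ _)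
        have hq2 : (q:ℝ) ≤ sR + r/2 := min_le_right _ _
        show (u:ℝ) - sR < r
        linarith
      have hb := hball u hdistu
      rw [dist_comm, hmaster s u hsu.le] at hb
      have hvu : x < v u := hgt u hsu
      have hbig : ε ≤ v u - v s := le_trans (min_le_right _ _) (by linarith)
      have h2 : 2*δ - (v u - v s) < ε := by
        rcases min_cases (v u - v s) (2*δ - (v u - v s)) with ⟨hmin, _⟩ | ⟨hmin, _⟩
        · rw [hmin] at hb; linarith
        · rw [hmin] at hb; exact hb
      exact ⟨u, hsu, min_le_left _ _, by linarith [min_le_left η (x - v s)]⟩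
    have hvs0 : v s = 0 := by
      by_contra h
      have h' : 0 < v s := lt_of_le_of_ne (hvnn s) (Ne.symm h)
      have hs1 : s < 1 := by
        rw [← Subtype.coe_lt_coe]
        exact hs1R
      obtain ⟨u, _, _, hlt⟩ := core (v s) h' 1 hs1
      linarith [hvub u]
    have hvw : ∀ u : I, s < u → v u = 2*δ := by
      intro u hsu
      by_contra h
      have h' : v u < 2*δ := lt_of_le_of_ne (hvub u) h
      obtain ⟨u', hsu', hu'le, hlt⟩ := core (2*δ - v u) (by linarith) u hsu
      have := hmono hu'le
      linarith
    apply hsmall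
    intro u
    rcases le_or_gt u s with h | h
    · left
      have := hmono h
      rw [hvs0] at this
      exact le_antisymm this (hvnn u)
    · right
      exact hvw u h
  · -- x < v s
    have hs0R : 0 < sR := by
      rcases lt_or_eq_of_le hsR0 with h | h
      · exact h
      · exfalso
        have : v s = 0 := by rw [show s = 0 from Subtype.ext h.symm, hv0]
        linarith
    have core' : ∀ η : ℝ, 0 < η → ∀ w₀ : I, w₀ < s →
        ∃ u : I, w₀ ≤ u ∧ v u + (2*δ - v s) < η := by
      intro η hη w₀ hw₀
      set ε := min η (v s - x) with hε
      have hεpos : 0 < ε := lt_min hη (by linarith)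
      obtain ⟨r, hr, hball⟩ := hcont ε hεpos
      have hw₀R : (w₀:ℝ) < sR := Subtype.coe_lt_coe.2 hw₀
      obtain ⟨u, huS, huclose⟩ := hnear (min r (sR - (w₀:ℝ))) (lt_min hr (by linarith))
      have hule : (u:ℝ) ≤ sR := le_csSup hSbdd ⟨u, huS, rfl⟩
      have hw0u : w₀ ≤ u := by
        rw [← Subtype.coe_le_coe]
        have h2 : min r (sR - (w₀:ℝ)) ≤ sR - (w₀:ℝ) := min_le_right _ _
        linarith
      have huleI : u ≤ s := Subtype.coe_le_coe.1 hule
      have hdistu : dist u s < r := by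
        rw [Subtype.dist_eq, Real.dist_eq,
          abs_of_nonpos (sub_nonpos.2 hule)]
        have h2 : min r (sR - (w₀:ℝ)) ≤ r := min_le_left _ _
        show -((u:ℝ) - sR) < r
        linarith
      have hb := hball u hdistu
      rw [hmaster u s huleI] at hb
      have hvu : v u < x := huS
      have hbig : ε ≤ v s - v u := le_trans (min_le_right _ _) (by linarith)
      have h2 : 2*δ - (v s - v u) < ε := by
        rcases min_cases (v s - v u) (2*δ - (v s - v u)) with ⟨hmin, _⟩ | ⟨hmin, _⟩
        · rw [hmin] at hb; linarith
        · rw [hmin] at hb; exact hb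
      exact ⟨u, hw0u, by linarith [min_le_left η (v s - x)]⟩
    have hvs2 : v s = 2*δ := by
      by_contra h
      have h' : v s < 2*δ := lt_of_le_of_ne (hvub s) h
      have hs0 : (0:I) < s := by
        rw [← Subtype.coe_lt_coe]
        exact hs0R
      obtain ⟨u, _, hlt⟩ := core' (2*δ - v s) (by linarith) 0 hs0
      linarith [hvnn u]
    have hvw : ∀ u : I, u < s → v u = 0 := by
      intro u hus
      by_contra h
      have h' : 0 < v u := lt_of_le_of_ne (hvnn u) (Ne.symm h)
      obtain ⟨u', hu'ge, hlt⟩ := core' (v u) h' u hus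
      have := hmono hu'ge
      linarith
    apply hsmall
    intro u
    rcases lt_or_ge u s with h | h
    · left; exact hvw u h
    · right
      have := hmono h
      rw [hvs2] at this
      exact le_antisymm (hvub u) this

lemma min_abs_eq (hδ : 0 < δ) (d e : ℝ) (k : ℤ) (hd : |d| ≤ δ) (he : |e| < 2*δ)
    (hek : e = d + 2*δ*k) : min |e| (2*δ - |e|) = |d| := by
  obtain ⟨hd1, hd2⟩ := abs_le.1 hd
  obtain ⟨he1, he2⟩ := abs_lt.1 he
  have hk : k = 0 ∨ k = 1 ∨ k = -1 := by
    have h2 : e - d = 2*δ*k := by linarith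
    have h1 : (2*δ)*|(k:ℝ)| < 3*δ := by
      have ha : |e - d| ≤ |e| + |d| := by
        calc |e - d| = |e + -d| := by ring_nf
          _ ≤ |e| + |-d| := abs_add_le _ _
          _ = |e| + |d| := by rw [abs_neg]
      rw [h2, abs_mul, abs_of_pos (by linarith : (0:ℝ) < 2*δ)] at ha
      linarith
    have h3 : |(k:ℝ)| < 3/2 := by nlinarith
    have h4 : (k:ℝ) < 2 := lt_of_le_of_lt (le_abs_self _) (by linarith)
    have h5 : (-2:ℝ) < k := by have := neg_abs_le (k:ℝ); linarith
    have h6 : k < 2 := by exact_mod_cast h4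
    have h7 : -2 < k := by exact_mod_cast h5
    omega
  rcases hk with rfl | rfl | rfl
  · have hed : e = d := by push_cast at hek; linarith
    rw [hed]
    exact min_eq_left (by rcases abs_cases d with ⟨h, _⟩ | ⟨h, _⟩ <;> linarith)
  · have he' : e = d + 2*δ := by push_cast at hek; linarith
    have hd' : d < 0 := by linarith
    have hge : δ ≤ e := by linarith
    rw [abs_of_nonneg (by linarith : (0:ℝ) ≤ e), abs_of_neg hd']
    rw [min_eq_right (by linarith)]
    linarith
  · have he' : e = d - 2*δ := by push_cast at hek; linarith
    have hd' : 0 < d := by linarith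
    have hle : e ≤ -δ := by linarith
    rw [abs_of_neg (by linarith : e < 0), abs_of_pos hd']
    rw [min_eq_right (by linarith)]
    linarith

end ClosedGeo

/-- In a path-connected length space, a rectifiable loop of length `≤ 2δ`
which is not δ-homotopic to a point has length exactly `2δ`, and its arclength
parametrization extends to a `2δ`-periodic map `c : ℝ → X` with
`dist (c s) (c t) = |s - t|` whenever `|s - t| ≤ δ` (a closed geodesic of length `2δ`,
minimizing on every subinterval of half its length). -/
theorem closed_geodesic_of_not_deltaHomotopic
    {X : Type*} [MetricSpace X] [PathConnectedSpace X] (hX : IsLengthSpace X)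
    (p : X) (δ : ℝ) (hδ : 0 < δ) {y : X} (γ : Path y y) (α : Path p y)
    (hlen : pathLength γ ≤ ENNReal.ofReal (2 * δ))
    (hnot : loopClass α γ ∉ coveringGroup X p δ) :
    pathLength γ = ENNReal.ofReal (2 * δ) ∧
    ∃ c : ℝ → X, Continuous c ∧ Function.Periodic c (2 * δ) ∧
      (∀ s t : ℝ, |s - t| ≤ δ → dist (c s) (c t) = |s - t|) ∧
      ∃ φ : I → ℝ, Monotone φ ∧ φ 0 = 0 ∧ φ 1 = 2 * δ ∧ ∀ t, γ t = c (φ t) := by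
    classical
  have h2δ : (0:ℝ) ≤ 2*δ := by linarith
  have htot : pathLength γ = ENNReal.ofReal (2*δ) := by
    rcases eq_or_lt_of_le hlen with h | h
    · exact h
    · exact absurd (ClosedGeo.mem_coveringGroup_of_ball α γ y
        (ClosedGeo.mem_ball_of_small hδ γ h)) hnot
  refine ⟨htot, ?_⟩
  have hfin : ∀ a b : I, eVariationOn γ (Set.Icc a b) ≠ ⊤ := by
    intro a b
    refine ne_top_of_le_ne_top ?_ (eVariationOn.mono γ (Set.subset_univ _))
    rw [← pathLength, htot]
    exact ENNReal.ofReal_ne_top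
  set v : I → ℝ := fun u => (eVariationOn γ (Set.Icc 0 u)).toReal with hv
  have hv0 : v 0 = 0 := by
    simp only [hv, Set.Icc_self]
    rw [eVariationOn.subsingleton γ (Set.subsingleton_singleton)]
    simp
  have hv1 : v 1 = 2*δ := by
    have h : eVariationOn (⇑γ) (Set.Icc (0:I) 1) = ENNReal.ofReal (2*δ) := by
      rw [← ClosedGeo.univ_eq_Icc]; exact htot
    show (eVariationOn (⇑γ) (Set.Icc (0:I) 1)).toReal = 2*δ
    rw [h, ENNReal.toReal_ofReal h2δ]
  have hmono : Monotone v := fun a b hab =>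
    ENNReal.toReal_mono (hfin 0 b) (eVariationOn.mono γ (Set.Icc_subset_Icc le_rfl hab))
  have hvnn : ∀ u, 0 ≤ v u := fun u => ENNReal.toReal_nonneg
  have hvub : ∀ u, v u ≤ 2*δ := fun u => hv1 ▸ hmono unitInterval.le_one'
  have hVst : ∀ s t : I, s ≤ t → (eVariationOn γ (Set.Icc s t)).toReal = v t - v s := by
    intro s t hst
    have h := congrArg ENNReal.toReal (ClosedGeo.icc_add γ (unitInterval.nonneg' : (0:I) ≤ s) hst)
    rw [ENNReal.toReal_add (hfin 0 s) (hfin s t)] at h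
    simp only [hv]
    linarith [h]
  have hmaster : ∀ s t : I, s ≤ t →
      dist (γ s) (γ t) = min (v t - v s) (2*δ - (v t - v s)) := by
    intro s t hst
    rw [ClosedGeo.master hX hδ α γ htot hnot s t hst, hVst s t hst]
  have hmasterAbs : ∀ a b : I, dist (γ a) (γ b) = min |v b - v a| (2*δ - |v b - v a|) := by
    intro a b
    rcases le_total a b with h | h
    · rw [hmaster a b h, abs_of_nonneg (sub_nonneg.2 (hmono h))]
    · rw [dist_comm, hmaster b a h, abs_of_nonpos (sub_nonpos.2 (hmono h)), neg_sub]
  have hgeq : ∀ a b : I, (|v b - v a| = 0 ∨ |v b - v a| = 2*δ) → γ a = γ b := by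
    intro a b h
    apply dist_eq_zero.1
    rw [hmasterAbs a b]
    rcases h with h | h <;> rw [h]
    · rw [min_eq_left (by linarith)]
    · rw [sub_self, min_eq_right (by linarith)]
  have hveq : ∀ a b : I, v a = v b → γ a = γ b := by
    intro a b h
    exact hgeq a b (Or.inl (by rw [h, sub_self, abs_zero]))
  -- construct c
  have h2δpos : (0:ℝ) < 2*δ := by linarith
  have hfr : ∀ r : ℝ, 0 ≤ 2*δ * Int.fract (r/(2*δ)) ∧ 2*δ * Int.fract (r/(2*δ)) ≤ 2*δ := by
    intro r
    constructor
    · exact mul_nonneg h2δ (Int.fract_nonneg _)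
    · nlinarith [Int.fract_lt_one (r/(2*δ)), Int.fract_nonneg (r/(2*δ))]
  have hfrlt : ∀ r : ℝ, 2*δ * Int.fract (r/(2*δ)) < 2*δ := by
    intro r
    nlinarith [Int.fract_lt_one (r/(2*δ)), Int.fract_nonneg (r/(2*δ))]
  choose w hw using fun r : ℝ =>
    ClosedGeo.surj_aux hX hδ α γ htot hnot (hfr r).1 (hfr r).2
  set c : ℝ → X := fun r => γ (w r) with hc
  have hwv : ∀ r : ℝ, v (w r) = 2*δ * Int.fract (r/(2*δ)) := hw
  have hfr2 : ∀ r : ℝ, 2*δ * Int.fract (r/(2*δ)) = r - 2*δ * ⌊r/(2*δ)⌋ := by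
    intro r
    rw [Int.fract]
    field_simp
  -- the key metric identity
  have cdist : ∀ s t : ℝ, |s - t| ≤ δ → dist (c s) (c t) = |s - t| := by
    intro s t hst
    have hds : dist (c s) (c t)
        = min |v (w t) - v (w s)| (2*δ - |v (w t) - v (w s)|) := hmasterAbs (w s) (w t)
    rw [hds, hwv, hwv, hfr2, hfr2]
    have hk : (t - 2*δ*⌊t/(2*δ)⌋) - (s - 2*δ*⌊s/(2*δ)⌋)
        = (t - s) + 2*δ*((⌊s/(2*δ)⌋ - ⌊t/(2*δ)⌋ : ℤ) : ℝ) := by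
      push_cast
      ring
    have habs : |(t - 2*δ*⌊t/(2*δ)⌋) - (s - 2*δ*⌊s/(2*δ)⌋)| < 2*δ := by
      have h1 := (hfr (s)).1
      have h2 := hfrlt s
      have h3 := (hfr (t)).1
      have h4 := hfrlt t
      rw [hfr2] at h1 h2
      rw [hfr2] at h3 h4
      rw [abs_lt]
      constructor <;> linarith
    have := ClosedGeo.min_abs_eq hδ (t - s)
      ((t - 2*δ*⌊t/(2*δ)⌋) - (s - 2*δ*⌊s/(2*δ)⌋))
      (⌊s/(2*δ)⌋ - ⌊t/(2*δ)⌋) (by rwa [abs_sub_comm]) habs hk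
    rw [this, abs_sub_comm]
  refine ⟨c, ?_, ?_, cdist, fun u => v u, hmono, hv0, hv1, ?_⟩
  · -- continuity
    rw [Metric.continuous_iff]
    intro b ε hε
    refine ⟨min δ ε, lt_min hδ hε, fun a ha => ?_⟩
    rw [Real.dist_eq] at ha
    rw [cdist a b (le_of_lt (lt_of_lt_of_le ha (min_le_left _ _)))]
    exact lt_of_lt_of_le ha (min_le_right _ _)
  · -- periodicity
    intro r
    show γ (w (r + 2*δ)) = γ (w r)
    apply hveq
    rw [hwv, hwv]
    congr 1
    have hq : (r + 2*δ)/(2*δ) = r/(2*δ) + 1 := by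
      field_simp
    rw [hq, Int.fract_add_one]
  · -- γ = c ∘ v
    intro u
    show γ u = γ (w (v u))
    apply hgeq
    rcases lt_or_eq_of_le (hvub u) with h | h
    · left
      have : v (w (v u)) = v u := by
        rw [hwv, Int.fract_eq_self.2 ⟨by positivity, (div_lt_one h2δpos).2 h⟩]
        field_simp
      rw [this, sub_self, abs_zero]
    · right
      have : v (w (v u)) = 0 := by
        rw [hwv, h, div_self (by positivity : (2*δ) ≠ 0), Int.fract_one, mul_zero]
      rw [this, h, zero_sub, abs_neg, abs_of_nonneg h2δ]
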